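/- If some membership proof π verifies an element e at position i against the root mroot d ℓ, but e ≠ ℓ i, then there exists a collision: either a pair x ≠ y with h x = h y, or a pair of pairs (a,b) ≠ (c,d) with H a b = H c d. (Constructive soundness: a verifying proof for a wrong element yields an explicit hash collision, matching the paper's collision-resistance argument.) -/
import Mathlib


variable {α β : Type*}

/-- First half of a family of `2^(d+1)` leaves. -/
def half0 {d : ℕ} (ℓ : Fin (2 ^ (d + 1)) → α) : Fin (2 ^ d) → α :=
  fun i => ℓ ⟨i.val, by
    have hi := i.isLt
    have h2 : 2 ^ (d + 1) = 2 ^ d + 2 ^ d := by rw [pow_succ]; ring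
    omega⟩

/-- Second half of a family of `2^(d+1)` leaves. -/
def half1 {d : ℕ} (ℓ : Fin (2 ^ (d + 1)) → α) : Fin (2 ^ d) → α :=
  fun i => ℓ ⟨2 ^ d + i.val, by
    have hi := i.isLt
    have h2 : 2 ^ (d + 1) = 2 ^ d + 2 ^ d := by rw [pow_succ]; ring
    omega⟩

/-- Merkle root of a family of `2^d` leaves, with leaf hash `h` and node combiner `H`. -/
def mroot (h : α → β) (H : β → β → β) : (d : ℕ) → (Fin (2 ^ d) → α) → β
  | 0, ℓ => h (ℓ ⟨0, by positivity⟩)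
  | d + 1, ℓ => H (mroot h H d (half0 ℓ)) (mroot h H d (half1 ℓ))

/-- Verification fold of a membership proof `π` (a vector of `d` hashes) for element `e`
at position `i`: `v 0 = h e`, and `v (k+1) = H (π k) (v k)` if the `k`-th bit of `i` is 1,
else `v (k+1) = H (v k) (π k)`. -/
def vfold (h : α → β) (H : β → β → β) (e : α) (i : ℕ) {d : ℕ} (π : Fin d → β) : ℕ → β
  | 0 => h e
  | k + 1 =>
    if hk : k < d then
      if i.testBit k then H (π ⟨k, hk⟩) (vfold h H e i π k)
      else H (vfold h H e i π k) (π ⟨k, hk⟩)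
    else vfold h H e i π k

/-- The membership proof `π` verifies element `e` at position `i` against root `r`. -/
def Verifies (h : α → β) (H : β → β → β) {d : ℕ} (π : Fin d → β) (e : α)
    (i : Fin (2 ^ d)) (r : β) : Prop :=
  vfold h H e i.val π d = r


/-- Constructive soundness: a membership proof verifying a wrong element against the
Merkle root yields an explicit collision of `h` or of `H`. -/
lemma vfold_restrict (h : α → β) (H : β → β → β) (e : α) {d : ℕ}
    (π : Fin (d + 1) → β) (i i' : ℕ)
    (hbit : ∀ k < d, i.testBit k = i'.testBit k) :
    ∀ k, k ≤ d →
      vfold h H e i π k = vfold h H e i' (fun j : Fin d => π j.castSucc) k := by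
  intro k
  induction k with
  | zero => intro _; rfl
  | succ k ihk =>
    intro hk
    have hkd : k < d := hk
    have ih := ihk (le_of_lt hkd)
    simp only [vfold, dif_pos hkd, dif_pos (Nat.lt_succ_of_lt hkd), hbit k hkd, ih]
    rfl

theorem membership_collision (h : α → β) (H : β → β → β)
    {d : ℕ} (ℓ : Fin (2 ^ d) → α) (π : Fin d → β) (e : α) (i : Fin (2 ^ d))
    (hv : Verifies h H π e i (mroot h H d ℓ)) (hne : e ≠ ℓ i) :
    (∃ x y : α, x ≠ y ∧ h x = h y) ∨
    (∃ a b c d' : β, (a, b) ≠ (c, d') ∧ H a b = H c d') := by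

  induction d with
  | zero =>
    left
    refine ⟨e, ℓ i, hne, ?_⟩
    have : i = ⟨0, by positivity⟩ := Fin.ext (by have := i.isLt; omega)
    rw [this] at hne ⊢
    exact hv
  | succ d ih =>
    unfold Verifies mroot at hv
    have hd : d < d + 1 := Nat.lt_succ_self d
    have h2 : (2 : ℕ) ^ (d + 1) = 2 ^ d + 2 ^ d := by rw [pow_succ]; ring
    have hpos : (0:ℕ) < 2 ^ d := by positivity
    set i' : Fin (2 ^ d) := ⟨i.val % 2 ^ d, Nat.mod_lt _ hpos⟩ with hi'
    have hbit : ∀ k < d, (i.val).testBit k = (i'.val).testBit k := by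
      intro k hk
      simp [hi', Nat.testBit_mod_two_pow, hk]
    have hrestr := vfold_restrict h H e π i.val i'.val hbit d le_rfl
    set π' : Fin d → β := fun j : Fin d => π j.castSucc with hπ'
    have hq : i.val / 2 ^ d ≤ 1 := by
      have := i.isLt
      rw [Nat.div_le_iff_le_mul_add_pred hpos]
      omega
    have htb : (i.val).testBit d = decide (i.val / 2 ^ d % 2 = 1) :=
      Nat.testBit_eq_decide_div_mod_eq ..
    simp only [vfold, dif_pos hd] at hv
    by_cases hb : (i.val).testBit d
    · -- second half
      have hq1 : i.val / 2 ^ d = 1 := by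
        rw [hb] at htb
        have h1 := of_decide_eq_true htb.symm
        generalize i.val / 2 ^ d = q at hq h1 ⊢
        omega
      have hiv : i.val = 2 ^ d + i'.val := by
        have := Nat.div_add_mod i.val (2 ^ d)
        rw [hq1, mul_one] at this
        show i.val = 2 ^ d + i.val % 2 ^ d
        omega
      have hleaf : half1 ℓ i' = ℓ i := by
        unfold half1
        congr 1
        exact Fin.ext hiv.symm
      rw [if_pos hb] at hv
      by_cases hpair : (π ⟨d, hd⟩, vfold h H e i.val π d)
          = (mroot h H d (half0 ℓ), mroot h H d (half1 ℓ))
      · have hv2 : vfold h H e i'.val π' d = mroot h H d (half1 ℓ) := by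
          rw [← hrestr]; exact congrArg Prod.snd hpair
        exact ih (half1 ℓ) π' i' hv2 (hleaf ▸ hne)
      · exact Or.inr ⟨_, _, _, _, hpair, hv⟩
    · -- first half
      have hq0 : i.val / 2 ^ d = 0 := by
        rw [Bool.not_eq_true] at hb
        rw [hb] at htb
        have h1 := of_decide_eq_false htb.symm
        generalize i.val / 2 ^ d = q at hq h1 ⊢
        omega
      have hiv : i.val = i'.val := by
        have := Nat.div_add_mod i.val (2 ^ d)
        rw [hq0, mul_zero] at this
        show i.val = i.val % 2 ^ d
        omega
      have hleaf : half0 ℓ i' = ℓ i := by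
        unfold half0
        congr 1
        exact Fin.ext hiv.symm
      rw [if_neg hb] at hv
      by_cases hpair : (vfold h H e i.val π d, π ⟨d, hd⟩)
          = (mroot h H d (half0 ℓ), mroot h H d (half1 ℓ))
      · have hv2 : vfold h H e i'.val π' d = mroot h H d (half0 ℓ) := by
          rw [← hrestr]; exact congrArg Prod.fst hpair
        exact ih (half0 ℓ) π' i' hv2 (hleaf ▸ hne)
      · exact Or.inr ⟨_, _, _, _, hpair, hv⟩
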